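/- Consider the antisymmetrizer A_N on the N-fold tensor power ⨂[ℂ]^N V (the tensor power whose length equals dim V = N). Then: (i) the range of A_N is a one-dimensional ℂ-subspace of ⨂[ℂ]^N V; and (ii) for every U ∈ SU(N) and every x in the range of A_N, U^{⊗N} x = x. (The totally antisymmetric representation on N quarks is a singlet precisely at threshold N = dim V.) -/

import Mathlib

open scoped TensorProduct

/-- The permutation operator `P_σ` on the `m`-fold tensor power of `V = Fin N → ℂ`,
sending `v₁ ⊗ ⋯ ⊗ v_m` to `v_{σ⁻¹(1)} ⊗ ⋯ ⊗ v_{σ⁻¹(m)}`. -/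
noncomputable def permOp (N m : ℕ) (σ : Equiv.Perm (Fin m)) :
    (⨂[ℂ] _ : Fin m, (Fin N → ℂ)) →ₗ[ℂ] ⨂[ℂ] _ : Fin m, (Fin N → ℂ) :=
  (PiTensorProduct.reindex ℂ (fun _ : Fin m => (Fin N → ℂ)) σ).toLinearMap

/-- The antisymmetrizer `A_p = (p!)⁻¹ ∑_σ sign(σ) P_σ` on `V^{⊗ p}`. -/
noncomputable def antisym (N p : ℕ) :
    (⨂[ℂ] _ : Fin p, (Fin N → ℂ)) →ₗ[ℂ] ⨂[ℂ] _ : Fin p, (Fin N → ℂ) :=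
  (Nat.factorial p : ℂ)⁻¹ •
    ∑ σ : Equiv.Perm (Fin p), ((Equiv.Perm.sign σ : ℤ) : ℂ) • permOp N p σ

/-- The `m`-fold tensor power `U^{⊗m}` of the linear map given by the matrix `U`. -/
noncomputable def tpowMap (N m : ℕ) (U : Matrix (Fin N) (Fin N) ℂ) :
    (⨂[ℂ] _ : Fin m, (Fin N → ℂ)) →ₗ[ℂ] ⨂[ℂ] _ : Fin m, (Fin N → ℂ) :=
  PiTensorProduct.map fun _ => Matrix.toLin' U

open PiTensorProduct

/-- basis vectors -/
noncomputable def ebase (N : ℕ) : Fin N → (Fin N → ℂ) := fun i => Pi.single i 1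

/-- the antisymmetric tensor -/
noncomputable def omegaT (N : ℕ) : ⨂[ℂ] _ : Fin N, (Fin N → ℂ) :=
  antisym N N (tprod ℂ (ebase N))

lemma antisym_tprod (N p : ℕ) (f : Fin p → (Fin N → ℂ)) :
    antisym N p (tprod ℂ f) = (Nat.factorial p : ℂ)⁻¹ •
      ∑ σ : Equiv.Perm (Fin p), ((Equiv.Perm.sign σ : ℤ) : ℂ) •
        tprod ℂ (fun i => f (σ⁻¹ i)) := by
  simp only [antisym, LinearMap.smul_apply, LinearMap.sum_apply, permOp,
    LinearEquiv.coe_coe, PiTensorProduct.reindex_tprod]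
  rfl

/-- antisym of a permuted basis tensor -/
lemma antisym_tprod_perm (N : ℕ) (g : Equiv.Perm (Fin N)) :
    antisym N N (tprod ℂ (fun i => ebase N (g i))) =
      ((Equiv.Perm.sign g : ℤ) : ℂ) • omegaT N := by
  have key : (∑ σ : Equiv.Perm (Fin N), ((Equiv.Perm.sign σ : ℤ) : ℂ) •
        tprod ℂ (fun i => ebase N (g (σ⁻¹ i)))) =
      ((Equiv.Perm.sign g : ℤ) : ℂ) • ∑ σ : Equiv.Perm (Fin N),
        ((Equiv.Perm.sign σ : ℤ) : ℂ) • tprod ℂ (fun i => ebase N (σ⁻¹ i)) := by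
    rw [Finset.smul_sum]
    rw [← Equiv.sum_comp (Equiv.mulRight g) (fun σ : Equiv.Perm (Fin N) =>
      ((Equiv.Perm.sign σ : ℤ) : ℂ) • tprod ℂ (fun i => ebase N (g (σ⁻¹ i))))]
    apply Finset.sum_congr rfl
    intro τ _
    simp only [Equiv.coe_mulRight]
    have h1 : ∀ i, g ((τ * g)⁻¹ i) = τ⁻¹ i := by intro i; simp [mul_inv_rev]
    have h2 : ((Equiv.Perm.sign (τ * g) : ℤ) : ℂ)
        = ((Equiv.Perm.sign g : ℤ) : ℂ) * ((Equiv.Perm.sign τ : ℤ) : ℂ) := by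
      simp [mul_comm]
    rw [h2, mul_smul]
    congr 1
    simp only [h1]
  rw [antisym_tprod, omegaT, antisym_tprod, key, smul_comm]

/-- antisym kills tensors with a repeated basis index -/
lemma antisym_tprod_of_not_inj (N : ℕ) (g : Fin N → Fin N) (hg : ¬ Function.Injective g) :
    antisym N N (tprod ℂ (fun i => ebase N (g i))) = 0 := by
  rw [antisym_tprod]
  rw [show (∑ σ : Equiv.Perm (Fin N), ((Equiv.Perm.sign σ : ℤ) : ℂ) •
        tprod ℂ (fun i => ebase N (g (σ⁻¹ i)))) = 0 from ?_, smul_zero]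
  obtain ⟨i, j, hgij, hij⟩ : ∃ i j, g i = g j ∧ i ≠ j := by
    simp only [Function.Injective, not_forall] at hg
    obtain ⟨i, j, h1, h2⟩ := hg; exact ⟨i, j, h1, h2⟩
  set τ := Equiv.swap i j with hτ
  have hgτ : ∀ x, g (τ x) = g x := by
    intro x
    rcases eq_or_ne x i with rfl | hxi
    · simp [hτ, Equiv.swap_apply_left, hgij]
    rcases eq_or_ne x j with rfl | hxj
    · simp [hτ, Equiv.swap_apply_right, hgij]
    · simp [hτ, Equiv.swap_apply_of_ne_of_ne hxi hxj]
  have key : ∀ σ : Equiv.Perm (Fin N),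
      ((Equiv.Perm.sign (σ * τ) : ℤ) : ℂ) • tprod ℂ (fun k => ebase N (g ((σ * τ)⁻¹ k)))
      = - (((Equiv.Perm.sign σ : ℤ) : ℂ) • tprod ℂ (fun k => ebase N (g (σ⁻¹ k)))) := by
    intro σ
    have hsign : ((Equiv.Perm.sign (σ * τ) : ℤ) : ℂ) = - ((Equiv.Perm.sign σ : ℤ) : ℂ) := by
      simp [hτ, Equiv.Perm.sign_swap hij]
    have htp : (fun k => ebase N (g ((σ * τ)⁻¹ k))) = fun k => ebase N (g (σ⁻¹ k)) := by
      funext k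
      have h3 : (σ * τ)⁻¹ k = τ⁻¹ (σ⁻¹ k) := by simp [mul_inv_rev]
      have h4 : τ⁻¹ = τ := by simp [hτ]
      rw [h3, h4, hgτ]
    rw [hsign, htp]
    module
  have hsum := Equiv.sum_comp (Equiv.mulRight τ) (fun σ : Equiv.Perm (Fin N) =>
    ((Equiv.Perm.sign σ : ℤ) : ℂ) • tprod ℂ (fun k => ebase N (g (σ⁻¹ k))))
  simp only [Equiv.coe_mulRight] at hsum
  set S := ∑ σ : Equiv.Perm (Fin N), ((Equiv.Perm.sign σ : ℤ) : ℂ) •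
      tprod ℂ (fun k => ebase N (g (σ⁻¹ k))) with hS
  have h2 : S = -S := by
    conv_lhs => rw [← hsum]
    rw [← Finset.sum_neg_distrib]
    exact Finset.sum_congr rfl fun σ _ => key σ
  have h3 : (2 : ℂ) • S = 0 := by rw [two_smul]; nth_rewrite 1 [h2]; exact neg_add_cancel S
  have := (smul_eq_zero.mp h3).resolve_left (by norm_num)
  exact this

/-- expansion of a pure tensor in the basis -/
lemma tprod_expand (N : ℕ) (v : Fin N → (Fin N → ℂ)) :
    tprod ℂ v = ∑ g : Fin N → Fin N,
      (∏ i, v i (g i)) • tprod ℂ (fun i => ebase N (g i)) := by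
  have hv : v = fun i => ∑ j, v i j • ebase N j := by
    funext i k
    simp [ebase, Pi.single_apply, Finset.sum_ite_eq', eq_comm]
  conv_lhs => rw [hv]
  rw [(tprod ℂ (s := fun _ : Fin N => (Fin N → ℂ))).map_sum
    (g := fun i j => v i j • ebase N j)]
  apply Finset.sum_congr rfl
  intro g _
  rw [(tprod ℂ (s := fun _ : Fin N => (Fin N → ℂ))).map_smul_univ]

lemma antisym_apply_mem_span (N : ℕ) (x : ⨂[ℂ] _ : Fin N, (Fin N → ℂ)) :
    antisym N N x ∈ Submodule.span ℂ {omegaT N} := by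
  have hx : x ∈ Submodule.span ℂ (Set.range (tprod ℂ (s := fun _ : Fin N => (Fin N → ℂ)))) := by
    rw [PiTensorProduct.span_tprod_eq_top]; trivial
  induction hx using Submodule.span_induction with
  | mem y hy =>
    obtain ⟨v, rfl⟩ := hy
    rw [tprod_expand, map_sum]
    apply Submodule.sum_mem
    intro g _
    rw [map_smul]
    apply Submodule.smul_mem
    by_cases hg : Function.Injective g
    · have hb : Function.Bijective g := Finite.injective_iff_bijective.mp hg
      have : g = ⇑(Equiv.ofBijective g hb) := rfl
      rw [this, antisym_tprod_perm]
      exact Submodule.smul_mem _ _ (Submodule.mem_span_singleton_self _)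
    · rw [antisym_tprod_of_not_inj N g hg]
      exact Submodule.zero_mem _
  | zero => simp
  | add y z _ _ hy hz => rw [map_add]; exact Submodule.add_mem _ hy hz
  | smul c y _ hy => rw [map_smul]; exact Submodule.smul_mem _ _ hy

/-- the coefficient functional -/
noncomputable def phiF (N : ℕ) : (⨂[ℂ] _ : Fin N, (Fin N → ℂ)) →ₗ[ℂ] ℂ :=
  PiTensorProduct.lift
    ((MultilinearMap.mkPiAlgebra ℂ (Fin N) ℂ).compLinearMap fun i => LinearMap.proj i)

lemma phiF_tprod (N : ℕ) (f : Fin N → (Fin N → ℂ)) :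
    phiF N (tprod ℂ f) = ∏ i, f i i := by
  simp [phiF, PiTensorProduct.lift.tprod]

lemma omegaT_ne_zero (N : ℕ) : omegaT N ≠ 0 := by
  intro h
  have : phiF N (omegaT N) = (Nat.factorial N : ℂ)⁻¹ := by
    rw [omegaT, antisym_tprod, map_smul, map_sum]
    have key : ∀ σ : Equiv.Perm (Fin N),
        phiF N (((Equiv.Perm.sign σ : ℤ) : ℂ) • tprod ℂ (fun i => ebase N (σ⁻¹ i)))
        = if σ = 1 then 1 else 0 := by
      intro σ
      rw [map_smul, phiF_tprod]
      rcases eq_or_ne σ 1 with rfl | hσ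
      · simp [ebase, Pi.single_apply, show (Equiv.symm (1 : Equiv.Perm (Fin N))) = 1 from rfl]
      · obtain ⟨i, hi⟩ : ∃ i, σ⁻¹ i ≠ i := by
          by_contra hc
          push_neg at hc
          refine hσ ?_
          apply Equiv.ext
          intro j
          have := hc (σ j)
          simpa using this.symm
        have hz : (∏ j, ebase N (σ⁻¹ j) j) = 0 := by
          apply Finset.prod_eq_zero (Finset.mem_univ i)
          simp [ebase, Pi.single_apply, Ne.symm (show σ.symm i ≠ i from hi)]
        rw [hz, smul_zero, if_neg hσ]
    rw [Finset.sum_congr rfl fun σ _ => key σ]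
    simp
  rw [h, map_zero] at this
  have hne : ((Nat.factorial N : ℂ))⁻¹ ≠ 0 := by
    simp [Nat.factorial_ne_zero]
  exact hne this.symm

lemma range_antisym (N : ℕ) :
    LinearMap.range (antisym N N) = Submodule.span ℂ {omegaT N} := by
  apply le_antisymm
  · rintro _ ⟨x, rfl⟩
    exact antisym_apply_mem_span N x
  · rw [Submodule.span_le, Set.singleton_subset_iff]
    exact ⟨tprod ℂ (ebase N), rfl⟩

lemma tpow_comm_perm (N m : ℕ) (U : Matrix (Fin N) (Fin N) ℂ) (σ : Equiv.Perm (Fin m)) :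
    (tpowMap N m U).comp (permOp N m σ) = (permOp N m σ).comp (tpowMap N m U) := by
  apply PiTensorProduct.ext
  apply MultilinearMap.ext
  intro f
  simp [tpowMap, permOp, PiTensorProduct.map_tprod, PiTensorProduct.reindex_tprod]

lemma tpow_antisym_apply (N p : ℕ) (U : Matrix (Fin N) (Fin N) ℂ)
    (x : ⨂[ℂ] _ : Fin p, (Fin N → ℂ)) :
    tpowMap N p U (antisym N p x) = antisym N p (tpowMap N p U x) := by
  simp only [antisym, LinearMap.smul_apply, LinearMap.sum_apply, map_smul, map_sum]
  congr 1
  apply Finset.sum_congr rfl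
  intro σ _
  congr 1
  exact LinearMap.congr_fun (tpow_comm_perm N p U σ) x

lemma tpow_omegaT (N : ℕ) (U : Matrix (Fin N) (Fin N) ℂ) :
    tpowMap N N U (omegaT N) = U.det • omegaT N := by
  rw [omegaT, tpow_antisym_apply]
  have h1 : tpowMap N N U (tprod ℂ (ebase N)) =
      tprod ℂ (fun i => Matrix.toLin' U (ebase N i)) := by
    simp [tpowMap, PiTensorProduct.map_tprod]
  rw [h1, tprod_expand, map_sum]
  have hcoef : ∀ g : Fin N → Fin N, (∏ i, (Matrix.toLin' U (ebase N i)) (g i))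
      = ∏ i, U (g i) i := by
    intro g
    apply Finset.prod_congr rfl
    intro i _
    simp [ebase, Matrix.toLin'_apply, Matrix.mulVec_single]
  simp only [hcoef, map_smul]
  -- restrict the sum to bijective maps
  set F : (Fin N → Fin N) → (⨂[ℂ] _ : Fin N, (Fin N → ℂ)) :=
    fun g => (∏ i, U (g i) i) • antisym N N (tprod ℂ (fun i => ebase N (g i))) with hF
  have hzero : ∀ g : Fin N → Fin N, ¬ Function.Injective g → F g = 0 := by
    intro g hg
    simp [hF, antisym_tprod_of_not_inj N g hg]
  have himg : ∑ g ∈ Finset.univ.image (fun σ : Equiv.Perm (Fin N) => ⇑σ), F g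
      = ∑ σ : Equiv.Perm (Fin N), F ⇑σ :=
    Finset.sum_image (fun a _ b _ hab => Equiv.coe_fn_injective hab)
  have hsub : (∑ g : Fin N → Fin N, F g)
      = ∑ g ∈ Finset.univ.image (fun σ : Equiv.Perm (Fin N) => ⇑σ), F g := by
    symm
    apply Finset.sum_subset (Finset.subset_univ _)
    intro g _ hg
    apply hzero
    intro hginj
    apply hg
    have hb : Function.Bijective g := Finite.injective_iff_bijective.mp hginj
    exact Finset.mem_image.mpr ⟨Equiv.ofBijective g hb, Finset.mem_univ _, rfl⟩
  rw [hsub, himg, Matrix.det_apply', Finset.sum_smul]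
  apply Finset.sum_congr rfl
  intro σ _
  rw [hF]
  simp only [antisym_tprod_perm, smul_smul]
  congr 1
  ring

/-- At threshold `p = N = dim V`, the totally antisymmetric representation on `N` quarks is a
singlet: the range of `A_N` is one-dimensional and pointwise fixed by `U^{⊗N}` for every
`U ∈ SU(N)`. -/
theorem antisym_top_is_singlet (N : ℕ) (hN : 0 < N) :
    Module.finrank ℂ (LinearMap.range (antisym N N)) = 1 ∧
      ∀ U : Matrix.specialUnitaryGroup (Fin N) ℂ,
        ∀ x ∈ LinearMap.range (antisym N N),
          tpowMap N N (U : Matrix (Fin N) (Fin N) ℂ) x = x := by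
  constructor
  · rw [range_antisym]
    exact finrank_span_singleton (omegaT_ne_zero N)
  · intro U x hx
    rw [range_antisym, Submodule.mem_span_singleton] at hx
    obtain ⟨c, rfl⟩ := hx
    rw [map_smul, tpow_omegaT]
    have hdet : (U : Matrix (Fin N) (Fin N) ℂ).det = 1 :=
      (Matrix.mem_specialUnitaryGroup_iff.mp U.2).2
    rw [hdet, one_smul]
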